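/- Let z be a dyadic rational in (0,1) of level N ≥ 1. Consider the multiset of levels of all points on the left path z, l(z), …, 0 and the right path z, r(z), …, 1, excluding z itself and the endpoints 0 and 1. Then every integer n with 0 < n < N occurs exactly once among these levels. -/

import Mathlib

/-- A rational is dyadic if it can be written as `k / 2^n`. -/
def IsDyadic (q : ℚ) : Prop := ∃ (k : ℤ) (n : ℕ), q = (k : ℚ) / 2 ^ n

/-- Membership in `Z`, the set of dyadic rationals of `[0,1]`. -/
def InZ (q : ℚ) : Prop := 0 ≤ q ∧ q ≤ 1 ∧ IsDyadic q

/-- The level of a dyadic rational: the least `n` with `q = k / 2^n` for some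
integer `k`.  The endpoints `0` and `1` have level `0`. -/
noncomputable def level (q : ℚ) : ℕ := sInf {n : ℕ | ∃ k : ℤ, q = (k : ℚ) / 2 ^ n}

/-- The left neighbor `l(z) = (k-1)/2^n` of `z = k/2^n` (in lowest terms,
`k` odd, `n ≥ 1`); points of level `0` are fixed. -/
noncomputable def lnb (q : ℚ) : ℚ :=
  if level q = 0 then q else q - (1 / 2 : ℚ) ^ level q

/-- The right neighbor `r(z) = (k+1)/2^n` of `z = k/2^n` (in lowest terms,
`k` odd, `n ≥ 1`); points of level `0` are fixed. -/
noncomputable def rnb (q : ℚ) : ℚ :=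
  if level q = 0 then q else q + (1 / 2 : ℚ) ^ level q

lemma level_int (k : ℤ) : level (k : ℚ) = 0 := by
  apply Nat.eq_zero_of_le_zero
  refine Nat.sInf_le ?_
  exact ⟨k, by norm_num⟩

lemma level_zero : level (0 : ℚ) = 0 := by simpa using level_int 0
lemma level_one : level (1 : ℚ) = 0 := by simpa using level_int 1

lemma lnb_fix {q : ℚ} (h : level q = 0) : lnb q = q := if_pos h
lemma rnb_fix {q : ℚ} (h : level q = 0) : rnb q = q := if_pos h

lemma lnb_apply {q : ℚ} {N : ℕ} (h : level q = N) (hN : 1 ≤ N) :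
    lnb q = q - (1 / 2 : ℚ) ^ N := by
  rw [lnb, h, if_neg (by omega)]
lemma rnb_apply {q : ℚ} {N : ℕ} (h : level q = N) (hN : 1 ≤ N) :
    rnb q = q + (1 / 2 : ℚ) ^ N := by
  rw [rnb, h, if_neg (by omega)]

lemma level_odd {k : ℤ} {n : ℕ} (hk : Odd k) :
    level ((k : ℚ) / 2 ^ n) = n := by
  have hall : ∀ m : ℕ, (∃ j : ℤ, (k : ℚ) / 2 ^ n = (j : ℚ) / 2 ^ m) → n ≤ m := by
    rintro m ⟨j, hj⟩
    by_contra hlt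
    push_neg at hlt
    field_simp at hj
    have keyz : k * 2 ^ m = j * 2 ^ n := by rw [mul_comm j]; exact_mod_cast hj
    have hkeq : k = j * 2 ^ (n - m) := by
      have h2 : (2:ℤ) ^ m ≠ 0 := by positivity
      apply mul_right_cancel₀ h2
      rw [keyz, mul_assoc, ← pow_add, Nat.sub_add_cancel hlt.le]
    have hev : Even k := by
      rw [hkeq]
      have hsub : n - m = (n - m - 1) + 1 := by omega
      rw [hsub, pow_succ]
      exact ⟨j * 2 ^ (n-m-1), by ring⟩
    exact (Int.not_odd_iff_even.mpr hev) hk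
  exact le_antisymm (Nat.sInf_le ⟨k, rfl⟩) (le_csInf ⟨n, k, rfl⟩ hall)

lemma exists_odd_rep {z : ℚ} {N : ℕ} (h : level z = N) (hN : 1 ≤ N) :
    ∃ k : ℤ, Odd k ∧ z = (k : ℚ) / 2 ^ N := by
  have hne : {m : ℕ | ∃ j : ℤ, z = (j : ℚ) / 2 ^ m}.Nonempty := by
    by_contra hc
    rw [Set.not_nonempty_iff_eq_empty] at hc
    rw [level, hc, Nat.sInf_empty] at h
    omega
  have hmem := Nat.sInf_mem hne
  rw [show sInf {m : ℕ | ∃ j : ℤ, z = (j : ℚ) / 2 ^ m} = level z from rfl, h] at hmem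
  obtain ⟨k, hk⟩ := hmem
  rcases Int.even_or_odd k with ⟨j, hj⟩ | hodd
  · exfalso
    have hmem2 : N - 1 ∈ {m : ℕ | ∃ i : ℤ, z = (i : ℚ) / 2 ^ m} := by
      refine ⟨j, ?_⟩
      rw [hk, hj]
      have hNe : N = (N-1) + 1 := by omega
      rw [hNe]
      push_cast
      rw [pow_succ]
      ring
    have hle := Nat.sInf_le hmem2
    rw [show sInf {m : ℕ | ∃ j : ℤ, z = (j : ℚ) / 2 ^ m} = level z from rfl, h] at hle
    omega
  · exact ⟨k, hodd, hk⟩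

lemma EU_swap {α : Type*} {A B C : α → Prop} (h : ∃! u, (A u ∨ B u) ∧ C u) :
    ∃! u, (B u ∨ A u) ∧ C u := by
  obtain ⟨u, ⟨hab, hc⟩, hu⟩ := h
  exact ⟨u, ⟨hab.symm, hc⟩, fun y hy => hu y ⟨hy.1.symm, hy.2⟩⟩

lemma step_generic (f g : ℚ → ℚ) (N : ℕ) (z w : ℚ)
    (hfz : f z = w) (hgz : g z = g w) (hlw : level w = N)
    (Hf : ∀ i : ℕ, 1 ≤ i → level (f^[i] w) < N)
    (Hg : ∀ j : ℕ, 1 ≤ j → level (g^[j] w) < N)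
    (Hc : ∀ n : ℕ, 0 < n → n < N →
      ∃! u : ℚ, ((∃ i : ℕ, 1 ≤ i ∧ u = f^[i] w) ∨ (∃ j : ℕ, 1 ≤ j ∧ u = g^[j] w)) ∧
        level u = n) :
    (∀ i : ℕ, 1 ≤ i → level (f^[i] z) < N + 1) ∧
    (∀ j : ℕ, 1 ≤ j → level (g^[j] z) < N + 1) ∧
    (∀ n : ℕ, 0 < n → n < N + 1 →
      ∃! u : ℚ, ((∃ i : ℕ, 1 ≤ i ∧ u = f^[i] z) ∨ (∃ j : ℕ, 1 ≤ j ∧ u = g^[j] z)) ∧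
        level u = n) := by
  have hL : ∀ i : ℕ, f^[i+1] z = f^[i] w := by
    intro i; rw [Function.iterate_succ_apply, hfz]
  have hR : ∀ j : ℕ, g^[j+1] z = g^[j+1] w := by
    intro j; rw [Function.iterate_succ_apply, Function.iterate_succ_apply, hgz]
  refine ⟨?_, ?_, ?_⟩
  · rintro i hi
    obtain ⟨i', rfl⟩ : ∃ i', i = i' + 1 := ⟨i - 1, by omega⟩
    rw [hL]
    rcases Nat.eq_zero_or_pos i' with rfl | hi'
    · simpa [hlw] using Nat.lt_succ_self N
    · exact lt_trans (Hf i' hi') (Nat.lt_succ_self N)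
  · rintro j hj
    obtain ⟨j', rfl⟩ : ∃ j', j = j' + 1 := ⟨j - 1, by omega⟩
    rw [hR]
    exact lt_trans (Hg (j'+1) (by omega)) (Nat.lt_succ_self N)
  · intro n hn hn'
    rcases eq_or_lt_of_le (Nat.lt_succ_iff.mp hn') with rfl | hnN
    · -- n = N : the unique point is w
      refine ⟨w, ⟨Or.inl ⟨1, le_rfl, by simpa using hfz.symm⟩, hlw⟩, ?_⟩
      rintro u ⟨hupath | hupath, hulv⟩
      · obtain ⟨i, hi1, rfl⟩ := hupath
        obtain ⟨i', rfl⟩ : ∃ i', i = i' + 1 := ⟨i - 1, by omega⟩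
        rcases Nat.eq_zero_or_pos i' with rfl | hi'
        · simpa using hfz
        · exfalso
          rw [hL] at hulv
          exact absurd hulv (Nat.ne_of_lt (Hf i' hi'))
      · obtain ⟨j, hj1, rfl⟩ := hupath
        obtain ⟨j', rfl⟩ : ∃ j', j = j' + 1 := ⟨j - 1, by omega⟩
        exfalso
        rw [hR] at hulv
        exact absurd hulv (Nat.ne_of_lt (Hg (j'+1) (by omega)))
    · -- n < N : use the unique point on w's paths
      obtain ⟨u, ⟨hupath, hulv⟩, huniq⟩ := Hc n hn hnN
      refine ⟨u, ⟨?_, hulv⟩, ?_⟩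
      · rcases hupath with ⟨i, hi1, rfl⟩ | ⟨j, hj1, rfl⟩
        · exact Or.inl ⟨i + 1, by omega, (hL i).symm⟩
        · obtain ⟨j', rfl⟩ : ∃ j', j = j' + 1 := ⟨j - 1, by omega⟩
          exact Or.inr ⟨j' + 1, by omega, (hR j').symm⟩
      · rintro u' ⟨hupath' | hupath', hulv'⟩
        · obtain ⟨i, hi1, rfl⟩ := hupath'
          obtain ⟨i', rfl⟩ : ∃ i', i = i' + 1 := ⟨i - 1, by omega⟩
          rcases Nat.eq_zero_or_pos i' with rfl | hi'
          · exfalso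
            simp only [hL, Function.iterate_zero_apply] at hulv'
            omega
          · exact huniq _ ⟨Or.inl ⟨i', hi', hL i'⟩, hulv'⟩
        · obtain ⟨j, hj1, rfl⟩ := hupath'
          obtain ⟨j', rfl⟩ : ∃ j', j = j' + 1 := ⟨j - 1, by omega⟩
          exact huniq _ ⟨Or.inr ⟨j' + 1, by omega, hR j'⟩, hulv'⟩

lemma aux_main (N : ℕ) (hN : 1 ≤ N) : ∀ z : ℚ, InZ z → level z = N →
    (∀ i : ℕ, 1 ≤ i → level (lnb^[i] z) < N) ∧
    (∀ j : ℕ, 1 ≤ j → level (rnb^[j] z) < N) ∧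
    (∀ n : ℕ, 0 < n → n < N →
      ∃! w : ℚ, ((∃ i : ℕ, 1 ≤ i ∧ w = lnb^[i] z) ∨ (∃ j : ℕ, 1 ≤ j ∧ w = rnb^[j] z)) ∧
        level w = n) := by
  induction N, hN using Nat.le_induction with
  | base =>
    intro z hz hlev
    obtain ⟨k, hodd, hk⟩ := exists_odd_rep hlev le_rfl
    obtain ⟨h0, h1, -⟩ := hz
    have h2pos : (0:ℚ) < 2 ^ 1 := by norm_num
    have hk0 : (0:ℚ) ≤ k := by
      rw [hk] at h0; have := (le_div_iff₀ h2pos).mp h0; simpa using this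
    have hk1 : (k:ℚ) ≤ 2 ^ 1 := by
      rw [hk] at h1; exact (div_le_one h2pos).mp h1
    have hk0' : (0:ℤ) ≤ k := by exact_mod_cast hk0
    have hk1' : k ≤ 2 := by exact_mod_cast hk1
    obtain ⟨t, ht⟩ := hodd
    have hkval : k = 1 := by omega
    have hzval : z = 1/2 := by rw [hk, hkval]; norm_num
    have hlnb : lnb z = 0 := by
      rw [lnb_apply hlev le_rfl, hzval]; norm_num
    have hrnb : rnb z = 1 := by
      rw [rnb_apply hlev le_rfl, hzval]; norm_num
    refine ⟨?_, ?_, ?_⟩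
    · rintro i hi
      obtain ⟨i', rfl⟩ : ∃ i', i = i' + 1 := ⟨i - 1, by omega⟩
      rw [Function.iterate_succ_apply, hlnb,
        Function.iterate_fixed (lnb_fix level_zero), level_zero]
      omega
    · rintro j hj
      obtain ⟨j', rfl⟩ : ∃ j', j = j' + 1 := ⟨j - 1, by omega⟩
      rw [Function.iterate_succ_apply, hrnb,
        Function.iterate_fixed (rnb_fix level_one), level_one]
      omega
    · intro n hn hn'
      omega
  | succ N hN1 IH =>
    intro z hz hlev
    obtain ⟨k, hodd, hk⟩ := exists_odd_rep hlev (by omega)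
    obtain ⟨h0, h1, -⟩ := hz
    have h2pos : (0:ℚ) < 2 ^ (N+1) := by positivity
    have hk0 : (0:ℤ) ≤ k := by
      rw [hk] at h0
      have := (le_div_iff₀ h2pos).mp h0
      exact_mod_cast (by simpa using this : (0:ℚ) ≤ k)
    have hk1 : k ≤ 2 ^ (N+1) := by
      rw [hk] at h1
      have := (div_le_one h2pos).mp h1
      exact_mod_cast this
    obtain ⟨m, hm⟩ := hodd
    have hm0 : 0 ≤ m := by omega
    have hmlt : m ≤ 2 ^ N - 1 := by
      have : (2:ℤ) ^ (N+1) = 2 * 2 ^ N := by rw [pow_succ]; ring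
      omega
    have h2Npos : (0:ℚ) < 2 ^ N := by positivity
    have hlz : lnb z = z - (1/2:ℚ) ^ (N+1) := lnb_apply hlev (by omega)
    have hrz : rnb z = z + (1/2:ℚ) ^ (N+1) := rnb_apply hlev (by omega)
    rcases Int.even_or_odd m with ⟨t, ht⟩ | hmodd
    · -- m even : rnb z has level N
      have hw : rnb z = ((m+1 : ℤ) : ℚ) / 2 ^ N := by
        rw [hrz, hk, hm]
        push_cast
        rw [one_div_pow]
        field_simp
        ring
      have hm1odd : Odd (m+1) := ⟨t, by omega⟩
      have hlw : level (rnb z) = N := by rw [hw]; exact level_odd hm1odd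
      have hwZ : InZ (rnb z) := by
        refine ⟨?_, ?_, ⟨m+1, N, hw⟩⟩
        · rw [hw]
          exact div_nonneg (by exact_mod_cast (by omega : (0:ℤ) ≤ m + 1)) h2Npos.le
        · rw [hw]
          exact (div_le_one h2Npos).mpr (by exact_mod_cast (by omega : m + 1 ≤ (2:ℤ)^N))
      have hgz : lnb z = lnb (rnb z) := by
        rw [lnb_apply hlw hN1, hrz, hlz, pow_succ]
        ring
      obtain ⟨ha, hb, hc⟩ := IH (rnb z) hwZ hlw
      obtain ⟨Ha, Hb, Hcc⟩ := step_generic rnb lnb N z (rnb z) rfl hgz hlw hb ha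
        (fun n hn hn' => EU_swap (hc n hn hn'))
      exact ⟨Hb, Ha, fun n hn hn' => EU_swap (Hcc n hn hn')⟩
    · -- m odd : lnb z has level N
      have hw : lnb z = ((m : ℤ) : ℚ) / 2 ^ N := by
        rw [hlz, hk, hm]
        push_cast
        rw [one_div_pow]
        field_simp
        ring
      have hlw : level (lnb z) = N := by rw [hw]; exact level_odd hmodd
      have hwZ : InZ (lnb z) := by
        refine ⟨?_, ?_, ⟨m, N, hw⟩⟩
        · rw [hw]
          exact div_nonneg (by exact_mod_cast hm0) h2Npos.le
        · rw [hw]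
          exact (div_le_one h2Npos).mpr (by exact_mod_cast (by omega : m ≤ (2:ℤ)^N))
      have hgz : rnb z = rnb (lnb z) := by
        rw [rnb_apply hlw hN1, hrz, hlz, pow_succ]
        ring
      obtain ⟨ha, hb, hc⟩ := IH (lnb z) hwZ hlw
      exact step_generic lnb rnb N z (lnb z) rfl hgz hlw ha hb hc

/-- Fact 1: for `z` of level `N ≥ 1`, every intermediate level `0 < n < N`
occurs exactly once among the points of the left path and the right path from
`z` (excluding `z` itself and the endpoints `0`, `1`, which have level `0`). -/
theorem intermediate_levels_occur_once (z : ℚ) (hz : InZ z) (hN : 1 ≤ level z) :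
    ∀ n : ℕ, 0 < n → n < level z →
      ∃! w : ℚ,
        ((∃ i : ℕ, 1 ≤ i ∧ w = lnb^[i] z) ∨ (∃ j : ℕ, 1 ≤ j ∧ w = rnb^[j] z)) ∧
        level w = n := by
  intro n hn hn'
  exact (aux_main (level z) hN z hz rfl).2.2 n hn hn'
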